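/- Let U₀ be a utility function with inverse marginal I₀ = (U₀′)^{−1}, and let I₁ be an inverse marginal function satisfying the functional equation I₁(a·y) + b·I₁(y) = (1+b)·I₀(c·y) for all y > 0. Define F(x,κ) = U₀(κ) + p·∫_{I₁((q/p)·U₀′(κ))}^{x} I₁^{−1}(ξ) dξ + (1−p)·∫_{I₁(((1−q)/(1−p))·U₀′(κ))}^{x} I₁^{−1}(ξ) dξ for x, κ > 0, where I₁^{−1} is the inverse function of I₁. Then for every x > 0 the map κ ↦ F(x,κ) is constant on (0,∞): F(x,κ) = F(x,1) for all x, κ > 0. -/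

import Mathlib

open Set Filter

noncomputable section

/-- A utility function: `C²` on `(0,∞)`, strictly increasing and strictly concave there,
satisfying the Inada conditions. -/
def IsUtility (U : ℝ → ℝ) : Prop :=
  ContDiffOn ℝ 2 U (Set.Ioi 0) ∧
  (∀ x > 0, 0 < deriv U x) ∧
  (∀ x > 0, deriv (deriv U) x < 0) ∧
  Tendsto (deriv U) (nhdsWithin 0 (Set.Ioi 0)) atTop ∧
  Tendsto (deriv U) atTop (nhds 0)

/-- An inverse marginal function: positive, `C¹` on `(0,∞)`, strictly decreasing derivative,
with `I(∞)=0` and `I(0+)=∞`. -/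
def IsInvMarginal (I : ℝ → ℝ) : Prop :=
  (∀ y > 0, 0 < I y) ∧
  ContDiffOn ℝ 1 I (Set.Ioi 0) ∧
  (∀ y > 0, deriv I y < 0) ∧
  Tendsto I atTop (nhds 0) ∧
  Tendsto I (nhdsWithin 0 (Set.Ioi 0)) atTop

/-- `I` is the inverse of the marginal `U'` on the positive reals: `I = (U')⁻¹`. -/
def InvMarginalOf (I U : ℝ → ℝ) : Prop :=
  (∀ x > 0, I (deriv U x) = x) ∧ (∀ y > 0, 0 < I y ∧ deriv U (I y) = y)

/-- `J` is the inverse function of `I` on the positive reals. -/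
def IsInverseOf (J I : ℝ → ℝ) : Prop :=
  (∀ y > 0, J (I y) = y) ∧ (∀ x > 0, 0 < J x ∧ I (J x) = x)

/-- The single-period inverse investment problem:
`U₀(x) = sup {p·U₁(x+π(u−1)) + (1−p)·U₁(x+π(d−1)) : −x/(u−1) ≤ π ≤ x/(1−d)}` for all `x > 0`. -/
def SPIIP (u d p : ℝ) (U₀ U₁ : ℝ → ℝ) : Prop :=
  ∀ x > 0, U₀ x =
    sSup ((fun pi => p * U₁ (x + pi * (u - 1)) + (1 - p) * U₁ (x + pi * (d - 1))) ''
      Set.Icc (-(x / (u - 1))) (x / (1 - d)))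

/-- The function
`F(x,κ) = U₀(κ) + p·∫_{I₁((q/p)U₀'(κ))}^x I₁⁻¹ + (1−p)·∫_{I₁(((1−q)/(1−p))U₀'(κ))}^x I₁⁻¹`
does not depend on `κ > 0`: `F(x,κ) = F(x,1)` for all `x, κ > 0`. -/
theorem stmt5
    (u d p q a b c : ℝ)
    (hu : 1 < u) (hd0 : 0 < d) (hd1 : d < 1) (hp0 : 0 < p) (hp1 : p < 1)
    (hq : q = (1 - d) / (u - d)) (ha : a = ((1 - p) * q) / (p * (1 - q)))
    (hb : b = (1 - q) / q) (hc : c = (1 - p) / (1 - q))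
    (U₀ I₀ I₁ J₁ : ℝ → ℝ)
    (hU₀ : IsUtility U₀) (hI₀ : InvMarginalOf I₀ U₀)
    (hI₁ : IsInvMarginal I₁)
    (hfeq : ∀ y > 0, I₁ (a * y) + b * I₁ y = (1 + b) * I₀ (c * y))
    (hJ₁ : IsInverseOf J₁ I₁)
    (F : ℝ → ℝ → ℝ)
    (hFdef : ∀ x > 0, ∀ κ > 0, F x κ =
      U₀ κ + p * (∫ ξ in (I₁ ((q / p) * deriv U₀ κ))..x, J₁ ξ)
        + (1 - p) * (∫ ξ in (I₁ (((1 - q) / (1 - p)) * deriv U₀ κ))..x, J₁ ξ)) :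
    ∀ x > 0, ∀ κ > 0, F x κ = F x 1 := by
  obtain ⟨hU₀c, hU₀d, hU₀dd, -, -⟩ := hU₀
  obtain ⟨hI₀l, hI₀r⟩ := hI₀
  obtain ⟨hI₁pos, hI₁c, hI₁d, -, -⟩ := hI₁
  obtain ⟨hJ₁l, hJ₁r⟩ := hJ₁
  have hud : (0:ℝ) < u - d := by linarith
  have hq0 : 0 < q := by rw [hq]; exact div_pos (by linarith) hud
  have hq1 : q < 1 := by rw [hq, div_lt_one hud]; linarith
  have hp1' : (0:ℝ) < 1 - p := by linarith
  have hq1' : (0:ℝ) < 1 - q := by linarith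
  set D := deriv U₀ with hDdef
  have hDpos : ∀ t > 0, 0 < D t := hU₀d
  -- positivity of the lower limits
  have hApos : ∀ t > 0, 0 < I₁ ((q / p) * D t) :=
    fun t ht => hI₁pos _ (mul_pos (div_pos hq0 hp0) (hDpos t ht))
  have hBpos : ∀ t > 0, 0 < I₁ (((1 - q) / (1 - p)) * D t) :=
    fun t ht => hI₁pos _ (mul_pos (div_pos hq1' hp1') (hDpos t ht))
  -- key identity: q·A(t) + (1-q)·B(t) = t
  have key : ∀ t > 0, q * I₁ ((q / p) * D t) + (1 - q) * I₁ (((1 - q) / (1 - p)) * D t) = t := by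
    intro t ht
    have hDt := hDpos t ht
    have hy : 0 < ((1 - q) / (1 - p)) * D t := mul_pos (div_pos hq1' hp1') hDt
    have h1 := hfeq _ hy
    have e1 : a * (((1 - q) / (1 - p)) * D t) = (q / p) * D t := by
      rw [ha]; field_simp
    have e2 : c * (((1 - q) / (1 - p)) * D t) = D t := by
      rw [hc]; field_simp
    rw [e1, e2, hI₀l t ht] at h1
    have hb1 : q * (1 + b) = 1 := by rw [hb]; field_simp; ring
    have hb2 : q * b = 1 - q := by rw [hb]; field_simp
    linear_combination q * h1 - I₁ ((1 - q) / (1 - p) * D t) * hb2 + t * hb1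
  -- strict antitonicity of I₁ on (0,∞)
  have hI₁anti : StrictAntiOn I₁ (Ioi 0) := by
    apply strictAntiOn_of_deriv_neg (convex_Ioi 0) hI₁c.continuousOn
    intro y hy
    rw [interior_Ioi] at hy
    exact hI₁d y hy
  have hJ₁pos : ∀ z > 0, 0 < J₁ z := fun z hz => (hJ₁r z hz).1
  have hIJ : ∀ z > 0, I₁ (J₁ z) = z := fun z hz => (hJ₁r z hz).2
  -- J₁ strictly antitone on (0,∞)
  have hJ₁anti : StrictAntiOn J₁ (Ioi 0) := by
    intro z hz w hw hzw
    rcases lt_trichotomy (J₁ w) (J₁ z) with h | h | h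
    · exact h
    · exfalso
      have : I₁ (J₁ w) = I₁ (J₁ z) := by rw [h]
      rw [hIJ w hw, hIJ z hz] at this
      exact absurd this.symm (ne_of_lt hzw)
    · exfalso
      have := hI₁anti (hJ₁pos z hz) (hJ₁pos w hw) h
      rw [hIJ w hw, hIJ z hz] at this
      exact absurd hzw (not_lt.2 this.le)
  -- continuity of J₁ on (0,∞)
  have hJ₁cont : ∀ z > 0, ContinuousAt J₁ z := by
    intro z hz
    have hmono : StrictMonoOn (fun w => -J₁ w) (Ioi 0) := fun s hs t ht hst =>
      neg_lt_neg (hJ₁anti hs ht hst)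
    have himg : (fun w => -J₁ w) '' (Ioi 0) = Iio 0 := by
      apply Subset.antisymm
      · rintro _ ⟨w, hw, rfl⟩
        exact neg_lt_zero.2 (hJ₁pos w hw)
      · rintro y hy
        refine ⟨I₁ (-y), hI₁pos _ (neg_pos.2 hy), ?_⟩
        simp [hJ₁l (-y) (neg_pos.2 hy)]
    have hc' : ContinuousAt (fun w => -J₁ w) z :=
      hmono.continuousAt_of_image_mem_nhds (Ioi_mem_nhds hz)
        (by rw [himg]; exact Iio_mem_nhds (neg_lt_zero.2 (hJ₁pos z hz)))
    have := hc'.neg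
    simpa only [Pi.neg_def, neg_neg] using this
  have hJ₁contOn : ContinuousOn J₁ (Ioi 0) := fun z hz => (hJ₁cont z hz).continuousWithinAt
  -- interval integrability
  have hInt : ∀ z > 0, ∀ w > 0, IntervalIntegrable J₁ MeasureTheory.volume z w := by
    intro z hz w hw
    have hsub : uIcc z w ⊆ Ioi 0 := fun s hs => lt_of_lt_of_le (lt_min hz hw) hs.1
    apply AntitoneOn.intervalIntegrable
    intro s hs t ht hst
    rcases eq_or_lt_of_le hst with rfl | h
    · exact le_refl _
    · exact (hJ₁anti (hsub hs) (hsub ht) h).le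
  -- differentiability facts
  have hDdiff : DifferentiableOn ℝ D (Ioi 0) :=
    (hU₀c.deriv_of_isOpen (m := 1) isOpen_Ioi (by norm_num)).differentiableOn one_ne_zero
  have hDhas : ∀ t > 0, HasDerivAt D (deriv D t) t := fun t ht =>
    (hDdiff.differentiableAt (isOpen_Ioi.mem_nhds ht)).hasDerivAt
  have hU₀has : ∀ t > 0, HasDerivAt U₀ (D t) t := fun t ht =>
    ((hU₀c.differentiableOn (by norm_num)).differentiableAt (isOpen_Ioi.mem_nhds ht)).hasDerivAt
  have hI₁has : ∀ y > 0, HasDerivAt I₁ (deriv I₁ y) y := fun y hy =>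
    ((hI₁c.differentiableOn one_ne_zero).differentiableAt (isOpen_Ioi.mem_nhds hy)).hasDerivAt
  intro x hx κ hκ
  rw [hFdef x hx κ hκ, hFdef x hx 1 one_pos]
  set G : ℝ → ℝ := fun t => U₀ t + p * (∫ ξ in (I₁ ((q / p) * D t))..x, J₁ ξ)
    + (1 - p) * (∫ ξ in (I₁ (((1 - q) / (1 - p)) * D t))..x, J₁ ξ) with hGdef
  have hG : ∀ t > 0, HasDerivAt G 0 t := by
    intro t ht
    have hDt := hDpos t ht
    have hyA : 0 < (q / p) * D t := mul_pos (div_pos hq0 hp0) hDt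
    have hyB : 0 < ((1 - q) / (1 - p)) * D t := mul_pos (div_pos hq1' hp1') hDt
    have hAt := hApos t ht
    have hBt := hBpos t ht
    -- derivatives of the inner functions
    have hA' : HasDerivAt (fun s => I₁ ((q / p) * D s))
        (deriv I₁ ((q / p) * D t) * ((q / p) * deriv D t)) t :=
      (hI₁has _ hyA).comp t ((hDhas t ht).const_mul (q / p))
    have hB' : HasDerivAt (fun s => I₁ (((1 - q) / (1 - p)) * D s))
        (deriv I₁ (((1 - q) / (1 - p)) * D t) * (((1 - q) / (1 - p)) * deriv D t)) t :=
      (hI₁has _ hyB).comp t ((hDhas t ht).const_mul ((1 - q) / (1 - p)))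
    set a'' := deriv I₁ ((q / p) * D t) * ((q / p) * deriv D t) with ha''
    set b'' := deriv I₁ (((1 - q) / (1 - p)) * D t) * (((1 - q) / (1 - p)) * deriv D t) with hb''
    -- the derivative of the key identity
    have hsum : HasDerivAt (fun s => q * I₁ ((q / p) * D s)
        + (1 - q) * I₁ (((1 - q) / (1 - p)) * D s)) (q * a'' + (1 - q) * b'') t :=
      (hA'.const_mul q).add (hB'.const_mul (1 - q))
    have heq : (fun s => q * I₁ ((q / p) * D s)
        + (1 - q) * I₁ (((1 - q) / (1 - p)) * D s)) =ᶠ[nhds t] id := by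
      filter_upwards [isOpen_Ioi.mem_nhds (show t ∈ Ioi (0:ℝ) from ht)] with s hs
      exact key s hs
    have hone : q * a'' + (1 - q) * b'' = 1 :=
      (hsum.congr_of_eventuallyEq heq.symm).unique (hasDerivAt_id t)
    -- FTC pieces
    have hFTC1 : HasDerivAt (fun z => ∫ ξ in z..x, J₁ ξ) (-J₁ (I₁ ((q / p) * D t)))
        (I₁ ((q / p) * D t)) :=
      intervalIntegral.integral_hasDerivAt_left (hInt _ hAt x hx)
        (ContinuousOn.stronglyMeasurableAtFilter isOpen_Ioi hJ₁contOn _ hAt)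
        (hJ₁cont _ hAt)
    have hFTC2 : HasDerivAt (fun z => ∫ ξ in z..x, J₁ ξ)
        (-J₁ (I₁ (((1 - q) / (1 - p)) * D t))) (I₁ (((1 - q) / (1 - p)) * D t)) :=
      intervalIntegral.integral_hasDerivAt_left (hInt _ hBt x hx)
        (ContinuousOn.stronglyMeasurableAtFilter isOpen_Ioi hJ₁contOn _ hBt)
        (hJ₁cont _ hBt)
    have h1 : HasDerivAt (fun s => ∫ ξ in (I₁ ((q / p) * D s))..x, J₁ ξ)
        (-J₁ (I₁ ((q / p) * D t)) * a'') t := by have := hFTC1.comp t hA'; exact this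
    have h2 : HasDerivAt (fun s => ∫ ξ in (I₁ (((1 - q) / (1 - p)) * D s))..x, J₁ ξ)
        (-J₁ (I₁ (((1 - q) / (1 - p)) * D t)) * b'') t := by have := hFTC2.comp t hB'; exact this
    have hGt : HasDerivAt G
        (D t + p * (-J₁ (I₁ ((q / p) * D t)) * a'')
          + (1 - p) * (-J₁ (I₁ (((1 - q) / (1 - p)) * D t)) * b'')) t :=
      ((hU₀has t ht).add (h1.const_mul p)).add (h2.const_mul (1 - p))
    have hval : D t + p * (-J₁ (I₁ ((q / p) * D t)) * a'')
        + (1 - p) * (-J₁ (I₁ (((1 - q) / (1 - p)) * D t)) * b'') = 0 := by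
      rw [hJ₁l _ hyA, hJ₁l _ hyB]
      have e3 : p * (-((q / p) * D t) * a'') = -(q * D t * a'') := by
        field_simp
      have e4 : (1 - p) * (-(((1 - q) / (1 - p)) * D t) * b'') = -((1 - q) * D t * b'') := by
        field_simp
      rw [e3, e4]
      linear_combination (-(D t)) * hone
    exact hval ▸ hGt
  -- constancy
  have hconst : ∀ s > 0, ∀ t > 0, G s = G t := by
    intro s hs t ht
    have hm : 0 < min s t := lt_min hs ht
    have hcont : ContinuousOn G (Icc (min s t) (max s t)) := fun z hz =>
      ((hG z (lt_of_lt_of_le hm hz.1)).continuousAt).continuousWithinAt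
    have hder : ∀ z ∈ Ico (min s t) (max s t), HasDerivWithinAt G 0 (Ici z) z := fun z hz =>
      (hG z (lt_of_lt_of_le hm hz.1)).hasDerivWithinAt
    have h1 := constant_of_has_deriv_right_zero hcont hder s ⟨min_le_left _ _, le_max_left _ _⟩
    have h2 := constant_of_has_deriv_right_zero hcont hder t ⟨min_le_right _ _, le_max_right _ _⟩
    rw [h1, h2]
  exact hconst κ hκ 1 one_pos
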